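/- Let f be twice differentiable with M-Lipschitz Hessian, and consider the damped Newton step p = −(H_est + λ_N I)^{-1} g where g = ∇f(w), H_est is symmetric positive semidefinite and λ_N > 0. With α = ‖I − ∇²f(w)(H_est + λ_N I)^{-1}‖ (operator norm), the post-step gradient satisfies ‖∇f(w + p)‖ ≤ α‖g‖ + (M/2)‖(H_est + λ_N I)^{-1}‖² ‖g‖². -/

import Mathlib

open RealInnerProductSpace ContinuousLinearMap

theorem damped_newton_post_step_gradient
    {d : ℕ} (f : EuclideanSpace ℝ (Fin d) → ℝ)
    (hf : ContDiff ℝ 2 f) (M : ℝ)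
    (hHess : ∀ u v : EuclideanSpace ℝ (Fin d),
      ‖fderiv ℝ (gradient f) u - fderiv ℝ (gradient f) v‖ ≤ M * ‖u - v‖)
    (Hest : EuclideanSpace ℝ (Fin d) →L[ℝ] EuclideanSpace ℝ (Fin d))
    (hsym : IsSelfAdjoint Hest)
    (hpsd : ∀ v : EuclideanSpace ℝ (Fin d), 0 ≤ ⟪v, Hest v⟫)
    (lamN : ℝ) (hlam : 0 < lamN)
    (K : EuclideanSpace ℝ (Fin d) →L[ℝ] EuclideanSpace ℝ (Fin d))
    (hK₁ : (Hest + lamN • (ContinuousLinearMap.id ℝ (EuclideanSpace ℝ (Fin d)))).comp K =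
      ContinuousLinearMap.id ℝ (EuclideanSpace ℝ (Fin d)))
    (hK₂ : K.comp (Hest + lamN • (ContinuousLinearMap.id ℝ (EuclideanSpace ℝ (Fin d)))) =
      ContinuousLinearMap.id ℝ (EuclideanSpace ℝ (Fin d)))
    (w : EuclideanSpace ℝ (Fin d))
    (g p : EuclideanSpace ℝ (Fin d)) (hg : g = gradient f w) (hp : p = -(K g))
    (α : ℝ)
    (hα : α = ‖ContinuousLinearMap.id ℝ (EuclideanSpace ℝ (Fin d)) -
      (fderiv ℝ (gradient f) w).comp K‖) :
    ‖gradient f (w + p)‖ ≤ α * ‖g‖ + M / 2 * ‖K‖ ^ 2 * ‖g‖ ^ 2 := by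
  set G : EuclideanSpace ℝ (Fin d) → EuclideanSpace ℝ (Fin d) := gradient f with hG
  have hG1 : ContDiff ℝ 1 G := by
    have h1 : ContDiff ℝ 1 (fderiv ℝ f) := hf.fderiv_right (by norm_num)
    have h2 : G = fun x => (InnerProductSpace.toDual ℝ
        (EuclideanSpace ℝ (Fin d))).symm (fderiv ℝ f x) := rfl
    rw [h2]
    exact (InnerProductSpace.toDual ℝ (EuclideanSpace ℝ (Fin d))).symm.contDiff.comp h1
  have hGd : Differentiable ℝ G := hG1.differentiable one_ne_zero
  set H : EuclideanSpace ℝ (Fin d) →L[ℝ] EuclideanSpace ℝ (Fin d) := fderiv ℝ G w with hH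
  set φ : ℝ → EuclideanSpace ℝ (Fin d) :=
    fun t => G (w + t • p) - G w - t • (H p) with hφ
  have hφd : ∀ t : ℝ, HasDerivAt φ ((fderiv ℝ G (w + t • p)) p - H p) t := by
    intro t
    have hline : HasDerivAt (fun t : ℝ => w + t • p) p t := by
      simpa using ((hasDerivAt_id t).smul_const p).const_add w
    have h1 : HasDerivAt (fun t : ℝ => G (w + t • p)) ((fderiv ℝ G (w + t • p)) p) t :=
      by have := (hGd (w + t • p)).hasFDerivAt.comp_hasDerivAt t hline; exact this
    have h2 : HasDerivAt (fun t : ℝ => G w + t • (H p)) (H p) t := by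
      simpa using ((hasDerivAt_id t).smul_const (H p)).const_add (G w)
    exact (h1.sub h2).congr_of_eventuallyEq (Filter.Eventually.of_forall fun s => by simp [hφ, sub_sub])
  have key : ‖φ 1‖ ≤ M * ‖p‖ ^ 2 / 2 * 1 ^ 2 := by
    have h0 : ‖φ 0‖ ≤ M * ‖p‖ ^ 2 / 2 * (0 : ℝ) ^ 2 := by
      have : φ 0 = 0 := by simp [hφ]
      rw [this]; simp
    refine image_norm_le_of_norm_deriv_right_le_deriv_boundary
      (f := φ) (a := 0) (b := 1)
      (f' := fun t => (fderiv ℝ G (w + t • p)) p - H p)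
      (fun t _ => (hφd t).continuousAt.continuousWithinAt)
      (fun t _ => (hφd t).hasDerivWithinAt)
      (B := fun t => M * ‖p‖ ^ 2 / 2 * t ^ 2) (B' := fun t => M * ‖p‖ ^ 2 * t)
      h0
      (fun t => by
        have h3 : HasDerivAt (fun t : ℝ => M * ‖p‖ ^ 2 / 2 * t ^ 2)
            (M * ‖p‖ ^ 2 / 2 * (2 * t)) t := by
          simpa using (hasDerivAt_pow 2 t).const_mul (M * ‖p‖ ^ 2 / 2)
        convert h3 using 1; ring)
      ?_ (Set.right_mem_Icc.2 zero_le_one)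
    intro t ht
    have h1 : ‖fderiv ℝ G (w + t • p) - H‖ ≤ M * (t * ‖p‖) := by
      have h2 := hHess (w + t • p) w
      have h3 : (w + t • p) - w = t • p := by abel
      rw [h3, norm_smul, Real.norm_eq_abs, abs_of_nonneg ht.1] at h2
      linarith
    calc ‖(fderiv ℝ G (w + t • p)) p - H p‖
        = ‖(fderiv ℝ G (w + t • p) - H) p‖ := by simp
      _ ≤ ‖fderiv ℝ G (w + t • p) - H‖ * ‖p‖ := le_opNorm _ _
      _ ≤ M * (t * ‖p‖) * ‖p‖ := mul_le_mul_of_nonneg_right h1 (norm_nonneg p)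
      _ = M * ‖p‖ ^ 2 * t := by ring
  have key1 : ‖G (w + p) - G w - H p‖ ≤ M / 2 * ‖p‖ ^ 2 := by
    have h4 : φ 1 = G (w + p) - G w - H p := by simp [hφ]
    rw [← h4]
    calc ‖φ 1‖ ≤ M * ‖p‖ ^ 2 / 2 * 1 ^ 2 := key
      _ = M / 2 * ‖p‖ ^ 2 := by ring
  have hid : g + H p = (ContinuousLinearMap.id ℝ (EuclideanSpace ℝ (Fin d))
      - H.comp K) g := by
    rw [hp]; simp [sub_eq_add_neg]
  have hlin : ‖g + H p‖ ≤ α * ‖g‖ := by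
    rw [hid, hα]
    exact le_opNorm _ _
  have hpK : ‖p‖ ≤ ‖K‖ * ‖g‖ := by
    rw [hp, norm_neg]; exact le_opNorm _ _
  by_cases hM : 0 ≤ M
  · have hdecomp : gradient f (w + p) = (g + H p) + (G (w + p) - G w - H p) := by
      rw [hg]; show G (w + p) = _; abel
    calc ‖gradient f (w + p)‖ = ‖(g + H p) + (G (w + p) - G w - H p)‖ := by rw [hdecomp]
      _ ≤ ‖g + H p‖ + ‖G (w + p) - G w - H p‖ := norm_add_le _ _
      _ ≤ α * ‖g‖ + M / 2 * ‖p‖ ^ 2 := add_le_add hlin key1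
      _ ≤ α * ‖g‖ + M / 2 * ‖K‖ ^ 2 * ‖g‖ ^ 2 := by
          have h5 : M / 2 * ‖p‖ ^ 2 ≤ M / 2 * ‖K‖ ^ 2 * ‖g‖ ^ 2 := by
            calc M / 2 * ‖p‖ ^ 2 ≤ M / 2 * (‖K‖ * ‖g‖) ^ 2 := by
                  gcongr
              _ = M / 2 * ‖K‖ ^ 2 * ‖g‖ ^ 2 := by ring
          linarith
  · push_neg at hM
    have hp0 : p = 0 := by
      by_contra hpne
      have h6 := hHess (w + p) w
      simp only [add_sub_cancel_left] at h6
      have h7 : M * ‖p‖ < 0 := mul_neg_of_neg_of_pos hM (norm_pos_iff.2 hpne)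
      exact absurd (le_trans (norm_nonneg _) h6) (not_le.2 h7)
    have hKg : K g = 0 := neg_eq_zero.mp (hp0 ▸ hp).symm
    have hg0 : g = 0 := by
      have h8 := congrArg (fun L : EuclideanSpace ℝ (Fin d) →L[ℝ]
        EuclideanSpace ℝ (Fin d) => L g) hK₁
      simpa [ContinuousLinearMap.comp_apply, hKg] using h8.symm
    have h9 : G (w + p) = g := by rw [hp0, add_zero, hg]
    rw [h9, hg0]
    simp only [norm_zero, mul_zero, add_zero]
    have : (0:ℝ) ^ 2 = 0 := by norm_num
    rw [this, mul_zero]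
    norm_num
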